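/- Define s_n := 1 + ∑_{m=1}^{n−1} ⌈m/2⌉·(m+2)! for n ≥ 1. Then for all integers k with 5 ≤ k ≤ n + 2, the fractional part of s_n/k! is at most 1/2 + 13/(24k). -/

import Mathlib

open Real Nat

/-- s_n = 1 + ∑_{m=1}^{n-1} ⌈m/2⌉·(m+2)! . -/
noncomputable def s (n : ℕ) : ℤ :=
  1 + ∑ m ∈ Finset.Icc 1 (n - 1), ⌈(m : ℚ) / 2⌉ * ((m + 2)! : ℤ)

lemma term_nonneg (m : ℕ) : (0:ℤ) ≤ ⌈(m : ℚ) / 2⌉ * ((m + 2)! : ℤ) := by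
  apply mul_nonneg
  · exact Int.ceil_nonneg (by positivity)
  · exact_mod_cast Nat.zero_le _

lemma s_pos (n : ℕ) : (1:ℤ) ≤ s n := by
  have h : (0:ℤ) ≤ ∑ m ∈ Finset.Icc 1 (n - 1), ⌈(m : ℚ) / 2⌉ * ((m + 2)! : ℤ) :=
    Finset.sum_nonneg fun m _ => term_nonneg m
  unfold s; linarith

lemma s_succ (N : ℕ) :
    s (N + 2) = s (N + 1) + ⌈((N + 1 : ℕ) : ℚ) / 2⌉ * ((N + 3)! : ℤ) := by
  unfold s
  rw [show N + 2 - 1 = N + 1 from rfl, show N + 1 - 1 = N from rfl,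
    Finset.sum_Icc_succ_top (by omega : 1 ≤ N + 1)]
  push_cast
  ring

lemma s_bound : ∀ n : ℕ, 2 * s n ≤ ((n + 2)! : ℤ)
  | 0 => by norm_num [s]
  | 1 => by norm_num [s, Nat.factorial]
  | (N + 2) => by
    have ih := s_bound (N + 1)
    rw [s_succ N]
    have h := Int.ceil_lt_add_one (((N + 1 : ℕ) : ℚ) / 2)
    have h2 : (2 * ⌈((N + 1 : ℕ) : ℚ) / 2⌉ : ℚ) < (N : ℚ) + 3 := by
      push_cast at h ⊢; linarith
    have hc : 2 * ⌈((N + 1 : ℕ) : ℚ) / 2⌉ ≤ (N : ℤ) + 2 := by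
      have : (2 * ⌈((N + 1 : ℕ) : ℚ) / 2⌉ : ℤ) < (N : ℤ) + 3 := by exact_mod_cast h2
      omega
    have hf4 : ((N + 2 + 2)! : ℤ) = ((N : ℤ) + 4) * ((N + 3)! : ℤ) := by
      rw [show N + 2 + 2 = N + 4 from rfl, show N + 4 = (N + 3) + 1 from rfl,
        Nat.factorial_succ]
      push_cast; ring
    have hF3 : (0:ℤ) < ((N + 3)! : ℤ) := by exact_mod_cast Nat.factorial_pos (N + 3)
    have ih' : 2 * s (N + 1) ≤ ((N + 3)! : ℤ) := ih
    rw [hf4]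
    nlinarith [mul_le_mul_of_nonneg_right hc (le_of_lt hF3)]

theorem stmt_13 (n : ℕ) (hn : 1 ≤ n) :
    ∀ k : ℕ, 5 ≤ k → k ≤ n + 2 →
      Int.fract ((s n : ℝ) / (k ! : ℝ)) ≤ 1 / 2 + 13 / (24 * (k : ℝ)) := by
  intro k hk5 hkn
  have hkf : (0:ℝ) < (k ! : ℝ) := by exact_mod_cast Nat.factorial_pos k
  -- split the sum
  have hsplit : s n = s (k - 2) +
      ∑ m ∈ Finset.Ioc (k - 3) (n - 1), ⌈(m : ℚ) / 2⌉ * ((m + 2)! : ℤ) := by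
    unfold s
    have h1 : Finset.Icc 1 (n - 1) = Finset.Ioc 0 (n - 1) := by
      rw [← Finset.Icc_add_one_left_eq_Ioc, zero_add]
    have h2 : Finset.Icc 1 (k - 2 - 1) = Finset.Ioc 0 (k - 3) := by
      rw [show k - 2 - 1 = k - 3 by omega, ← Finset.Icc_add_one_left_eq_Ioc, zero_add]
    rw [h1, h2]
    have := Finset.sum_Ioc_consecutive (fun m => ⌈(m : ℚ) / 2⌉ * ((m + 2)! : ℤ))
      (by omega : 0 ≤ k - 3) (by omega : k - 3 ≤ n - 1)
    linarith
  have hdvd : ((k ! : ℤ)) ∣ s n - s (k - 2) := by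
    rw [hsplit, add_sub_cancel_left]
    apply Finset.dvd_sum
    intro m hm
    simp only [Finset.mem_Ioc] at hm
    have : k ≤ m + 2 := by omega
    exact Dvd.dvd.mul_left (by exact_mod_cast Nat.factorial_dvd_factorial this) _
  obtain ⟨c, hc⟩ := hdvd
  have hfr : Int.fract ((s n : ℝ) / (k ! : ℝ)) = Int.fract ((s (k - 2) : ℝ) / (k ! : ℝ)) := by
    rw [Int.fract_eq_fract]
    refine ⟨c, ?_⟩
    have : (s n : ℝ) - (s (k - 2) : ℝ) = (k ! : ℝ) * (c : ℝ) := by exact_mod_cast hc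
    field_simp
    linarith [this]
  have hb : 2 * s (k - 2) ≤ ((k !) : ℤ) := by
    have := s_bound (k - 2)
    rwa [show k - 2 + 2 = k by omega] at this
  have hpos := s_pos (k - 2)
  have hle : (s (k - 2) : ℝ) / (k ! : ℝ) ≤ 1 / 2 := by
    rw [div_le_iff₀ hkf]
    have : (2 * s (k - 2) : ℝ) ≤ ((k !) : ℝ) := by exact_mod_cast hb
    linarith
  have hnn : (0:ℝ) ≤ (s (k - 2) : ℝ) / (k ! : ℝ) := by
    apply div_nonneg _ (le_of_lt hkf)
    exact_mod_cast le_trans zero_le_one hpos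
  have hlt1 : (s (k - 2) : ℝ) / (k ! : ℝ) < 1 := lt_of_le_of_lt hle (by norm_num)
  rw [hfr, Int.fract_eq_self.2 ⟨hnn, hlt1⟩]
  have hk0 : (0:ℝ) < (k : ℝ) := by positivity
  have : (0:ℝ) < 13 / (24 * (k : ℝ)) := by positivity
  linarith
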